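/- The Petersen graph is not Hamiltonian: it contains no cycle passing through all 10 vertices. -/

import Mathlib

set_option maxHeartbeats 4000000
set_option maxRecDepth 100000


/-- The Petersen graph as the Kneser graph K(5,2): vertices are 2-element
subsets of a 5-element set, adjacent iff disjoint. -/
def petersen : SimpleGraph {s : Finset (Fin 5) // s.card = 2} where
  Adj s t := Disjoint s.val t.val
  symm := ⟨fun s t h => h.symm⟩
  loopless := ⟨by
    intro s h
    rw [disjoint_self] at h
    have h2 := s.2
    rw [h] at h2
    simp at h2⟩

abbrev V5 := {s : Finset (Fin 5) // s.card = 2}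

instance : DecidableRel petersen.Adj :=
  fun s t => inferInstanceAs (Decidable (Disjoint s.val t.val))

def allV0 : List V5 :=
  (List.finRange 5).flatMap fun i => (List.finRange 5).filterMap fun j =>
    if h : ({i, j} : Finset (Fin 5)).card = 2 then some ⟨{i, j}, h⟩ else none

def allV : List V5 := allV0.dedup

lemma mem_allV (v : V5) : v ∈ allV := by
  rw [allV, List.mem_dedup]
  obtain ⟨a, b, hab, hs⟩ := Finset.card_eq_two.mp v.2
  unfold allV0
  rw [List.mem_flatMap]
  refine ⟨a, List.mem_finRange a, ?_⟩
  rw [List.mem_filterMap]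
  refine ⟨b, List.mem_finRange b, ?_⟩
  have hc : ({a, b} : Finset (Fin 5)).card = 2 := by
    rw [← hs]; exact v.2
  rw [dif_pos hc]
  congr 1
  exact Subtype.ext hs.symm

def step (p : List V5) : List (List V5) :=
  (allV.filter (fun x =>
    (match p.head? with
      | none => true
      | some h => decide (petersen.Adj x h)) && !(p.contains x))).map (· :: p)

def gen : ℕ → List (List V5)
  | 0 => [[]]
  | n + 1 => (gen n).flatMap step

lemma mem_gen : ∀ (t : List V5), t.Chain' petersen.Adj → t.Nodup → t ∈ gen t.length := by
  intro t
  induction t with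
  | nil => intro _ _; simp [gen]
  | cons a s ih =>
    intro hc hn
    have hs : s ∈ gen s.length := ih hc.tail hn.of_cons
    show a :: s ∈ gen (s.length + 1)
    rw [show gen (s.length + 1) = (gen s.length).flatMap step from rfl, List.mem_flatMap]
    refine ⟨s, hs, ?_⟩
    unfold step
    rw [List.mem_map]
    refine ⟨a, ?_, rfl⟩
    rw [List.mem_filter]
    constructor
    · exact mem_allV a
    · rw [Bool.and_eq_true]
      constructor
      · cases s with
        | nil => rfl
        | cons b s' =>
          simp only [List.head?]
          exact decide_eq_true ((List.isChain_cons_cons.mp hc).1)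
      · have ha : a ∉ s := (List.nodup_cons.mp hn).1
        simp [ha]

def closes (t : List V5) : Bool :=
  match t.head?, t.getLast? with
  | some h, some l => decide (petersen.Adj l h)
  | _, _ => false

/-- The Petersen graph is not Hamiltonian. -/
theorem petersen_not_hamiltonian :
    ¬ ∃ (v : {s : Finset (Fin 5) // s.card = 2}) (p : petersen.Walk v v),
        p.IsHamiltonianCycle := by
  rintro ⟨v, p, hp⟩
  have key : ∀ t ∈ gen 10, closes t = false := by decide
  set t := p.support.tail with ht
  clear_value t
  have hsup : p.support = v :: t := by rw [ht]; exact p.support_eq_cons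
  have hchain : List.Chain' petersen.Adj (v :: t) := by
    rw [← hsup]; exact p.isChain_adj_support
  have hnodup : t.Nodup := by rw [ht]; exact hp.isCycle.support_nodup
  have hcard : Fintype.card V5 = 10 := by decide
  have hlen : t.length = 10 := by
    have h1 : p.support.length = p.length + 1 := p.length_support
    have h2 : p.length = 10 := hp.length_eq.trans hcard
    rw [hsup] at h1
    simp only [List.length_cons] at h1
    omega
  have hne : t ≠ [] := by intro h; rw [h] at hlen; simp at hlen
  have hmem : t ∈ gen 10 := by rw [← hlen]; exact mem_gen t hchain.tail hnodup
  have hlast0 : p.support.getLast? = some v := by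
    rw [List.getLast?_eq_getLast p.support_ne_nil, p.getLast_support]
  have hlast : t.getLast? = some v := by
    rw [hsup] at hlast0
    cases t with
    | nil => exact absurd rfl hne
    | cons b s' => rwa [List.getLast?_cons_cons] at hlast0
  have hhead : petersen.Adj v (t.head hne) := by
    have := (List.isChain_cons.mp hchain).1
    exact this _ (List.head?_eq_head hne ▸ rfl)
  have hct : closes t = true := by
    unfold closes
    rw [List.head?_eq_head hne, hlast]
    exact decide_eq_true hhead
  rw [key t hmem] at hct
  exact absurd hct (by simp)
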